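/- The map orb_{F,r} is one-to-one: if (I_1, α_1) and (I_2, α_2) are pairs of a based fractional ideal of R_F and an element of K_F^× satisfying I_j² ⊆ α_j·I_F^{n-2} and N(I_j)² = r·N(α_j)·N(I_F^{n-2}) for j = 1, 2, and if the associated pairs of symmetric matrices lie in the same G_n(R)-orbit, then (I_1, α_1) and (I_2, α_2) are equivalent, i.e., there exists κ ∈ K_F^× such that α_1 = κ²·α_2 and the based ideals I_1 and κ·I_2 agree up to a G_n(R)-change of basis. -/

import Mathlib

open Polynomial Matrix MeasureTheory
open scoped Classical
noncomputable section
namespace BHS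



/-! ### Binary forms and the rings they cut out, over a general base -/

variable (R K : Type) [CommRing R] [Field K] [Algebra R K]

/-- The one-variable polynomial `F(x,1)` of the binary form of degree `n` with
coefficient vector `c` (so `F(x,z) = ∑ c i · x^(n-i) · z^i`), over `K`. -/
def binPoly (n : ℕ) (c : ℕ → R) : Polynomial K :=
  ∑ i ∈ Finset.range (n + 1), Polynomial.C (algebraMap R K (c i)) * Polynomial.X ^ (n - i)

/-- The étale algebra `K_F = K[x]/(F(x,1))`. -/
abbrev KF (n : ℕ) (c : ℕ → R) : Type := AdjoinRoot (binPoly R K n c)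

/-- θ, the image of x in K_F. -/
def θF (n : ℕ) (c : ℕ → R) : KF R K n c := AdjoinRoot.root _

/-- `ζ_i = ∑_{j<i} f_j θ^{i-j}`. -/
def ζF (n : ℕ) (c : ℕ → R) (i : ℕ) : KF R K n c :=
  ∑ j ∈ Finset.range i, algebraMap R (KF R K n c) (c j) * θF R K n c ^ (i - j)

/-- The ring `R_F`, as the free `R`-submodule of `K_F` with basis `1, ζ_1, …, ζ_{n-1}`
(a subring by Nakagawa's theorem). -/
def RFmod (n : ℕ) (c : ℕ → R) : Submodule R (KF R K n c) :=
  Submodule.span R ({1} ∪ {x | ∃ i, 1 ≤ i ∧ i ≤ n - 1 ∧ x = ζF R K n c i})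

/-- The fractional ideal `I_F^k`, as the free `R`-submodule of `K_F` with basis
`1, θ, …, θ^k, ζ_{k+1}, …, ζ_{n-1}`. -/
def IFmod (n : ℕ) (c : ℕ → R) (k : ℕ) : Submodule R (KF R K n c) :=
  Submodule.span R ({x | ∃ j ≤ k, x = θF R K n c ^ j} ∪
    {x | ∃ i, k + 1 ≤ i ∧ i ≤ n - 1 ∧ x = ζF R K n c i})

/-- `R_F` is the maximal order (the integral closure of `R`) in `K_F`. -/
def IsMaxOrder (n : ℕ) (c : ℕ → R) : Prop :=
  RFmod R K n c = Subalgebra.toSubmodule (integralClosure R (KF R K n c))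

/-- `M` is stable under multiplication by `R_F`, i.e. `M` is an `R_F`-submodule of `K_F`. -/
def IsStable (n : ℕ) (c : ℕ → R) (M : Submodule R (KF R K n c)) : Prop :=
  ∀ ρ ∈ RFmod R K n c, ∀ x ∈ M, ρ * x ∈ M

/-- `M` is an invertible fractional ideal of `R_F`. -/
def IsInvIdeal (n : ℕ) (c : ℕ → R) (M : Submodule R (KF R K n c)) : Prop :=
  IsStable R K n c M ∧
    ∃ N : Submodule R (KF R K n c), IsStable R K n c N ∧ M * N = RFmod R K n c

/-- The principal fractional ideal of `R_F` generated by `α`. -/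
def principal (n : ℕ) (c : ℕ → R) (α : KF R K n c) : Submodule R (KF R K n c) :=
  Submodule.span R {α} * RFmod R K n c

/-- `ρ` is a unit of the order `R_F`. -/
def IsUnitRF (n : ℕ) (c : ℕ → R) (ρ : KF R K n c) : Prop :=
  ρ ∈ RFmod R K n c ∧ ∃ σ ∈ RFmod R K n c, ρ * σ = 1

/-- `#R_F^×[2]`, the number of 2-torsion units of `R_F`. -/
def twoTorsUnitsCount (n : ℕ) (c : ℕ → R) : ℕ :=
  Nat.card {ρ : KF R K n c // ρ ∈ RFmod R K n c ∧ ρ ^ 2 = 1}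

/-- The number of 2-torsion elements of the ideal class group `Cl(R_F)`: the number of
invertible fractional ideals of `R_F` whose square is principal, counted modulo
principal fractional ideals. -/
def clTwoCount (n : ℕ) (c : ℕ → R) : ℕ :=
  Nat.card (Quot (fun (I J : {M : Submodule R (KF R K n c) //
      IsInvIdeal R K n c M ∧
        ∃ α : KF R K n c, IsUnit α ∧ M * M = principal R K n c α}) =>
    ∃ α : KF R K n c, IsUnit α ∧
      (I : Submodule R (KF R K n c)) =
        Submodule.span R {α} * (J : Submodule R (KF R K n c))))

/-- `α ∈ K_F` is totally positive: positive under every real embedding. -/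
def TotPos (n : ℕ) (c : ℕ → R) (α : KF R K n c) : Prop :=
  ∀ φ : KF R K n c →+* ℝ, 0 < φ α

/-- The number of 2-torsion elements of the narrow class group `Cl⁺(R_F)`. -/
def clTwoCountPlus (n : ℕ) (c : ℕ → R) : ℕ :=
  Nat.card (Quot (fun (I J : {M : Submodule R (KF R K n c) //
      IsInvIdeal R K n c M ∧
        ∃ α : KF R K n c, IsUnit α ∧ TotPos R K n c α ∧ M * M = principal R K n c α}) =>
    ∃ α : KF R K n c, IsUnit α ∧ TotPos R K n c α ∧
      (I : Submodule R (KF R K n c)) =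
        Submodule.span R {α} * (J : Submodule R (KF R K n c))))

/-- The order of the ideal class group of `R_F`. -/
def clCount (n : ℕ) (c : ℕ → R) : ℕ :=
  Nat.card (Quot (fun (I J : {M : Submodule R (KF R K n c) // IsInvIdeal R K n c M}) =>
    ∃ α : KF R K n c, IsUnit α ∧
      (I : Submodule R (KF R K n c)) =
        Submodule.span R {α} * (J : Submodule R (KF R K n c))))

/-- The order of the narrow class group of `R_F`. -/
def clCountPlus (n : ℕ) (c : ℕ → R) : ℕ :=
  Nat.card (Quot (fun (I J : {M : Submodule R (KF R K n c) // IsInvIdeal R K n c M}) =>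
    ∃ α : KF R K n c, IsUnit α ∧ TotPos R K n c α ∧
      (I : Submodule R (KF R K n c)) =
        Submodule.span R {α} * (J : Submodule R (KF R K n c))))


/-! ### Bases, norms, and the functionals π_{n-2}, π_{n-1} -/

/-- A `K`-basis of `K_F` (the power basis reindexed by `Fin n`). -/
def basisKF (n : ℕ) (c : ℕ → R) (hne : binPoly R K n c ≠ 0)
    (hdeg : (binPoly R K n c).natDegree = n) : Module.Basis (Fin n) K (KF R K n c) :=
  (AdjoinRoot.powerBasis hne).basis.reindex (finCongr hdeg)

/-- The vector `(1, ζ_1, …, ζ_{n-1})`, the standard basis of `R_F`. -/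
def eVec (n : ℕ) (c : ℕ → R) : Fin n → KF R K n c :=
  fun i => if (i : ℕ) = 0 then 1 else ζF R K n c i

/-- The vector `(1, θ, …, θ^k, ζ_{k+1}, …, ζ_{n-1})`, the standard basis of `I_F^k`. -/
def stdVec (n : ℕ) (c : ℕ → R) (k : ℕ) : Fin n → KF R K n c :=
  fun i => if (i : ℕ) ≤ k then θF R K n c ^ (i : ℕ) else ζF R K n c i

/-- The norm of a based fractional ideal with basis `b`: the determinant of the `K`-linear
map taking the standard basis `1, ζ_1, …, ζ_{n-1}` of `R_F` to `b`. -/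
def normBased (n : ℕ) (c : ℕ → R) (hne : binPoly R K n c ≠ 0)
    (hdeg : (binPoly R K n c).natDegree = n) (b : Fin n → KF R K n c) : K :=
  ((basisKF R K n c hne hdeg).toMatrix b).det /
    ((basisKF R K n c hne hdeg).toMatrix (eVec R K n c)).det

/-- Coordinates of `ρ ∈ K_F` in the basis `1, θ, …, θ^{n-2}, ζ_{n-1}` of `I_F^{n-2} ⊗ K = K_F`. -/
def coordStd (n : ℕ) (c : ℕ → R) (hne : binPoly R K n c ≠ 0)
    (hdeg : (binPoly R K n c).natDegree = n) (ρ : KF R K n c) : Fin n → K :=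
  Matrix.mulVec ((basisKF R K n c hne hdeg).toMatrix (stdVec R K n c (n - 2)))⁻¹
    (fun i => (basisKF R K n c hne hdeg).repr ρ i)

/-- The functional `π_{n-2}` (extended `K`-linearly to all of `K_F`): it kills
`1, θ, …, θ^{n-3}, ζ_{n-1}` and sends `θ^{n-2}` to `1`. -/
def piN2 (n : ℕ) (c : ℕ → R) (hn : 0 < n) (hne : binPoly R K n c ≠ 0)
    (hdeg : (binPoly R K n c).natDegree = n) (ρ : KF R K n c) : K :=
  coordStd R K n c hne hdeg ρ ⟨n - 2, by omega⟩

/-- The functional `π_{n-1}` (extended `K`-linearly to all of `K_F`): it kills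
`1, θ, …, θ^{n-2}` and sends `ζ_{n-1}` to `-1`. -/
def piN1 (n : ℕ) (c : ℕ → R) (hn : 0 < n) (hne : binPoly R K n c ≠ 0)
    (hdeg : (binPoly R K n c).natDegree = n) (ρ : KF R K n c) : K :=
  - coordStd R K n c hne hdeg ρ ⟨n - 1, by omega⟩


/-! ### The group G_n and pairs of symmetric matrices -/

/-- `G_n(S)`: `SL_n(S)` when `n` is odd, `SL_n^±(S)` when `n` is even. -/
def GnSet (S : Type) [CommRing S] (n : ℕ) : Set (Matrix (Fin n) (Fin n) S) :=
  {g | if Odd n then g.det = 1 else g.det = 1 ∨ g.det = -1}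

/-- `(A', B')` is in the `G_n(S)`-orbit of `(A, B)` under `g·(A,B) = (gAgᵀ, gBgᵀ)`. -/
def SameOrbit (S : Type) [CommRing S] (n : ℕ)
    (A B A' B' : Matrix (Fin n) (Fin n) S) : Prop :=
  ∃ g ∈ GnSet S n, A' = g * A * gᵀ ∧ B' = g * B * gᵀ

/-- The binary form `inv(x·A + z·B) = (-1)^⌊n/2⌋ det(x·A + z·B)`, as a polynomial
in the two variables `x = X 0`, `z = X 1`. -/
def invForm (S : Type) [CommRing S] (n : ℕ) (A B : Matrix (Fin n) (Fin n) S) :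
    MvPolynomial (Fin 2) S :=
  (-1) ^ (n / 2) *
    Matrix.det (Matrix.of fun i j =>
      MvPolynomial.X 0 * MvPolynomial.C (A i j) + MvPolynomial.X 1 * MvPolynomial.C (B i j))

/-- Coefficients of the monicized form `F_mon(x,z) = F(x, f_0·z)/f_0`. -/
def monC (S : Type) [CommRing S] (c : ℕ → S) (i : ℕ) : S :=
  if i = 0 then 1 else c i * c 0 ^ (i - 1)

/-- The binary form of degree `n` with coefficient vector `c`, as a polynomial in the
two variables `x = X 0`, `z = X 1`. -/
def mvForm (S : Type) [CommRing S] (n : ℕ) (c : ℕ → S) : MvPolynomial (Fin 2) S :=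
  ∑ i ∈ Finset.range (n + 1),
    MvPolynomial.C (c i) * MvPolynomial.X 0 ^ (n - i) * MvPolynomial.X 1 ^ i

/-- The identity `inv(x·A + z·B) = r · F_mon(x,z)` of binary forms of degree `n`. -/
def InvEq (S : Type) [CommRing S] (n : ℕ) (c : ℕ → S) (r : S)
    (A B : Matrix (Fin n) (Fin n) S) : Prop :=
  invForm S n A B = MvPolynomial.C r * mvForm S n (monC S c)


/-! ### Based fractional ideals and the orbit construction -/

/-- The data of a pair `(I, α)`: a based fractional ideal `I` of `R_F` with basis `b`,
and a unit `α ∈ K_F^×`, such that `I² ⊆ α·I_F^{n-2}` and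
`N(I)² = r·N(α)·N(I_F^{n-2})`. -/
structure BasedPair (n : ℕ) (c : ℕ → R) (r : R) (hne : binPoly R K n c ≠ 0)
    (hdeg : (binPoly R K n c).natDegree = n) : Type where
  b : Fin n → KF R K n c
  indep : LinearIndependent R b
  stable : IsStable R K n c (Submodule.span R (Set.range b))
  α : KF R K n c
  unitα : IsUnit α
  sq_sub : ∀ x ∈ Submodule.span R (Set.range b), ∀ y ∈ Submodule.span R (Set.range b),
      Ring.inverse α * (x * y) ∈ IFmod R K n c (n - 2)
  norm_eq : normBased R K n c hne hdeg b ^ 2 =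
      algebraMap R K r * Algebra.norm K α * normBased R K n c hne hdeg (stdVec R K n c (n - 2))

/-- The span of the basis of a based pair, i.e. the underlying fractional ideal. -/
def BasedPair.ideal {n : ℕ} {c : ℕ → R} {r : R} {hne : binPoly R K n c ≠ 0}
    {hdeg : (binPoly R K n c).natDegree = n} (P : BasedPair R K n c r hne hdeg) :
    Submodule R (KF R K n c) :=
  Submodule.span R (Set.range P.b)

/-- The underlying fractional ideal of the pair is invertible. -/
def BasedPair.IsInv {n : ℕ} {c : ℕ → R} {r : R} {hne : binPoly R K n c ≠ 0}
    {hdeg : (binPoly R K n c).natDegree = n} (P : BasedPair R K n c r hne hdeg) : Prop :=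
  IsInvIdeal R K n c (BasedPair.ideal R K P)

/-- The pair of symmetric matrices `(A, B)` represents the based pair `(I, α)`: `A` and `B`
are the matrices over `R` of the bilinear forms `π_{n-1}(α⁻¹βγ)` and `π_{n-2}(α⁻¹βγ)` on
`I × I` in the chosen basis. -/
def Represents (n : ℕ) (c : ℕ → R) (r : R) (hn : 0 < n) (hne : binPoly R K n c ≠ 0)
    (hdeg : (binPoly R K n c).natDegree = n) (P : BasedPair R K n c r hne hdeg)
    (A B : Matrix (Fin n) (Fin n) R) : Prop :=
  (∀ i j, algebraMap R K (A i j) =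
      piN1 R K n c hn hne hdeg (Ring.inverse P.α * (P.b i * P.b j))) ∧
  (∀ i j, algebraMap R K (B i j) =
      piN2 R K n c hn hne hdeg (Ring.inverse P.α * (P.b i * P.b j)))

/-- Equivalence of pairs `(I₁, α₁) ∼ (I₂, α₂)`: there is `κ ∈ K_F^×` with `α₁ = κ²·α₂`
and the based ideals `I₁` and `κ·I₂` equal up to a `G_n(R)`-change of basis. -/
def PairEquiv (n : ℕ) (c : ℕ → R) (r : R) (hne : binPoly R K n c ≠ 0)
    (hdeg : (binPoly R K n c).natDegree = n)
    (P Q : BasedPair R K n c r hne hdeg) : Prop :=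
  ∃ κ : KF R K n c, IsUnit κ ∧ P.α = κ ^ 2 * Q.α ∧
    ∃ g ∈ GnSet R n, ∀ i, P.b i = ∑ j, algebraMap R (KF R K n c) (g i j) * (κ * Q.b j)

/-- The `G_n(R)`-orbit of `(A, B)` lies in the image of the map `orb_{F,r}`. -/
def InOrbImage (n : ℕ) (c : ℕ → R) (r : R) (hn : 0 < n) (hne : binPoly R K n c ≠ 0)
    (hdeg : (binPoly R K n c).natDegree = n) (A B : Matrix (Fin n) (Fin n) R) : Prop :=
  ∃ P : BasedPair R K n c r hne hdeg, ∃ A' B',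
    Represents R K n c r hn hne hdeg P A' B' ∧ SameOrbit R n A' B' A B

/-- The `G_n(R)`-orbit of `(A, B)` lies in the image of `H*_{F,r}` (pairs with invertible
underlying ideal) under the map `orb_{F,r}`. -/
def InOrbImageStar (n : ℕ) (c : ℕ → R) (r : R) (hn : 0 < n) (hne : binPoly R K n c ≠ 0)
    (hdeg : (binPoly R K n c).natDegree = n) (A B : Matrix (Fin n) (Fin n) R) : Prop :=
  ∃ P : BasedPair R K n c r hne hdeg, BasedPair.IsInv R K P ∧ ∃ A' B',
    Represents R K n c r hn hne hdeg P A' B' ∧ SameOrbit R n A' B' A B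

/-- `φ` is an `R_F`-module endomorphism of the `R_F`-stable submodule `M`. -/
def IsRFEndo (n : ℕ) (c : ℕ → R) (M : Submodule R (KF R K n c))
    (hM : IsStable R K n c M) (φ : Module.End R ↥M) : Prop :=
  ∀ ρ (hρ : ρ ∈ RFmod R K n c) (x : ↥M),
    (↑(φ ⟨ρ * ↑x, hM ρ hρ ↑x x.2⟩) : KF R K n c) = ρ * ↑(φ x)

section Aux
variable {R K : Type} [CommRing R] [Field K] [Algebra R K]
variable {n : ℕ} {c : ℕ → R}

lemma basisKF_apply (hne : binPoly R K n c ≠ 0) (hdeg : (binPoly R K n c).natDegree = n)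
    (i : Fin n) : basisKF R K n c hne hdeg i = θF R K n c ^ (i : ℕ) := by
  unfold basisKF
  rw [Module.Basis.reindex_apply, PowerBasis.coe_basis]
  simp [AdjoinRoot.powerBasis_gen, θF]
  rfl

lemma root_identity (n : ℕ) (c : ℕ → R) :
    ∑ i ∈ Finset.range (n + 1), algebraMap R K (c i) • θF R K n c ^ (n - i) = 0 := by
  have h := AdjoinRoot.eval₂_root (binPoly R K n c)
  rw [binPoly, Polynomial.eval₂_finset_sum] at h
  refine Eq.trans ?_ h
  refine Finset.sum_congr rfl fun i _ => ?_
  rw [Polynomial.eval₂_mul, Polynomial.eval₂_C, Polynomial.eval₂_X_pow]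
  rw [← AdjoinRoot.algebraMap_eq, Algebra.smul_def]
  rfl

end Aux
section Aux2
variable {R K : Type} [CommRing R] [Field K] [Algebra R K]
variable {n : ℕ} {c : ℕ → R}

/-- coefficient vector of ζ_{n-1} in the power basis -/
def zvec (R K : Type) [CommRing R] [Field K] [Algebra R K] (n : ℕ) (c : ℕ → R) :
    Fin n → K :=
  fun i => if (i : ℕ) = 0 then 0 else algebraMap R K (c (n - 1 - (i : ℕ)))

lemma zeta_expand (hn : 3 ≤ n) :
    ζF R K n c (n-1) = ∑ i : Fin n, zvec R K n c i • θF R K n c ^ (i : ℕ) := by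
  have hstep1 : (∑ i : Fin n, zvec R K n c i • θF R K n c ^ (i : ℕ)) =
      ∑ j ∈ Finset.range n,
        (if j = 0 then 0 else algebraMap R K (c (n - 1 - j))) • θF R K n c ^ j :=
    Fin.sum_univ_eq_sum_range
      (fun j => (if j = 0 then 0 else algebraMap R K (c (n - 1 - j))) • θF R K n c ^ j) n
  have hstep2 : (∑ j ∈ Finset.range n,
        (if j = 0 then 0 else algebraMap R K (c (n - 1 - j))) • θF R K n c ^ j) =
      ∑ j ∈ Finset.Ico 1 n,
        algebraMap R K (c (n - 1 - j)) • θF R K n c ^ j := by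
    rw [Finset.range_eq_Ico, Finset.sum_eq_sum_Ico_succ_bot (by omega : 0 < n)]
    rw [if_pos rfl, zero_smul, zero_add]
    refine Finset.sum_congr rfl fun j hj => ?_
    rw [if_neg]
    simp only [Finset.mem_Ico] at hj
    omega
  have hstep3 : (∑ j ∈ Finset.Ico 1 n,
        algebraMap R K (c (n - 1 - j)) • θF R K n c ^ j) =
      ∑ k ∈ Finset.range (n - 1),
        algebraMap R K (c (n - 1 - (1 + k))) • θF R K n c ^ (1 + k) :=
    Finset.sum_Ico_eq_sum_range _ 1 n
  have hrefl := Finset.sum_range_reflect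
    (fun j => algebraMap R (KF R K n c) (c j) * θF R K n c ^ (n - 1 - j)) (n - 1)
  rw [ζF, ← hrefl, hstep1, hstep2, hstep3]
  refine Finset.sum_congr rfl fun j hj => ?_
  simp only [Finset.mem_range] at hj
  have h1 : n - 1 - 1 - j = n - 1 - (1 + j) := by omega
  have h3 : n - 1 - (n - 1 - (1 + j)) = 1 + j := by omega
  rw [h1, h3, IsScalarTower.algebraMap_apply R K (KF R K n c), Algebra.smul_def]

end Aux2
section Aux3
variable {R K : Type} [CommRing R] [Field K] [Algebra R K]
variable {n : ℕ} {c : ℕ → R}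

/-- change of basis matrix from power basis to stdVec basis -/
def MS (R K : Type) [CommRing R] [Field K] [Algebra R K] (n : ℕ) (c : ℕ → R)
    (hne : binPoly R K n c ≠ 0) (hdeg : (binPoly R K n c).natDegree = n) :
    Matrix (Fin n) (Fin n) K :=
  (basisKF R K n c hne hdeg).toMatrix (stdVec R K n c (n-2))

variable (hne : binPoly R K n c ≠ 0) (hdeg : (binPoly R K n c).natDegree = n)

lemma stdVec_low {i : Fin n} (h : (i : ℕ) ≤ n - 2) :
    stdVec R K n c (n-2) i = θF R K n c ^ (i : ℕ) := if_pos h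

lemma MS_eq (hn : 3 ≤ n) :
    MS R K n c hne hdeg =
      (1 : Matrix (Fin n) (Fin n) K).updateCol ⟨n-1, by omega⟩ (zvec R K n c) := by
  ext i j
  rw [MS, Module.Basis.toMatrix_apply, Matrix.updateCol_apply]
  by_cases hj : (j : ℕ) ≤ n - 2
  · have hjne : j ≠ ⟨n-1, by omega⟩ := by
      intro he; rw [he] at hj; simp at hj; omega
    rw [if_neg hjne, stdVec_low hj, ← basisKF_apply hne hdeg, Module.Basis.repr_self_apply,
      Matrix.one_apply]
    simp [eq_comm]
  · have hj' : (j : ℕ) = n - 1 := by have := j.2; omega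
    have hje : j = ⟨n-1, by omega⟩ := Fin.ext hj'
    rw [if_pos hje]
    have : stdVec R K n c (n-2) j = ζF R K n c (n-1) := by
      rw [stdVec, if_neg hj, hj']
    rw [this, zeta_expand hn]
    have : ∀ k : Fin n, zvec R K n c k • θF R K n c ^ (k : ℕ) =
        zvec R K n c k • basisKF R K n c hne hdeg k := by
      intro k; rw [basisKF_apply]
    rw [Finset.sum_congr rfl fun k _ => this k, Module.Basis.repr_sum_self]

lemma MS_det (hn : 3 ≤ n) : (MS R K n c hne hdeg).det = algebraMap R K (c 0) := by
  rw [MS_eq hne hdeg hn, ← Matrix.cramer_apply, Matrix.cramer_one]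
  show (if (n-1 : ℕ) = 0 then (0:K) else algebraMap R K (c (n - 1 - (n-1)))) = _
  rw [if_neg (by omega : ¬ (n-1 = 0)), Nat.sub_self]

lemma repr_sum_stdVec (w : Fin n → K) (i : Fin n) :
    (basisKF R K n c hne hdeg).repr (∑ j, w j • stdVec R K n c (n-2) j) i =
      Matrix.mulVec (MS R K n c hne hdeg) w i := by
  rw [map_sum, Finset.sum_apply']
  rw [Matrix.mulVec, dotProduct]
  refine Finset.sum_congr rfl fun j _ => ?_
  rw [_root_.map_smul, Finsupp.smul_apply, MS, Module.Basis.toMatrix_apply, smul_eq_mul]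
  exact mul_comm _ _

lemma coordStd_sum (hn : 3 ≤ n) (hc0 : algebraMap R K (c 0) ≠ 0) (w : Fin n → K) :
    coordStd R K n c hne hdeg (∑ j, w j • stdVec R K n c (n-2) j) = w := by
  have hdet : IsUnit (MS R K n c hne hdeg).det := by
    rw [MS_det hne hdeg hn]; exact isUnit_iff_ne_zero.mpr hc0
  rw [coordStd]
  have h1 : (fun i => (basisKF R K n c hne hdeg).repr
      (∑ j, w j • stdVec R K n c (n-2) j) i) = Matrix.mulVec (MS R K n c hne hdeg) w :=
    funext (repr_sum_stdVec hne hdeg w)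
  show Matrix.mulVec (MS R K n c hne hdeg)⁻¹ _ = w
  rw [h1, Matrix.mulVec_mulVec, Matrix.nonsing_inv_mul _ hdet, Matrix.one_mulVec]

lemma coordStd_spanning (hn : 3 ≤ n) (hc0 : algebraMap R K (c 0) ≠ 0) (ρ : KF R K n c) :
    ρ = ∑ i, coordStd R K n c hne hdeg ρ i • stdVec R K n c (n-2) i := by
  have hdet : IsUnit (MS R K n c hne hdeg).det := by
    rw [MS_det hne hdeg hn]; exact isUnit_iff_ne_zero.mpr hc0
  apply (basisKF R K n c hne hdeg).repr.injective
  ext i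
  rw [repr_sum_stdVec hne hdeg]
  show _ = Matrix.mulVec (MS R K n c hne hdeg)
      (Matrix.mulVec (MS R K n c hne hdeg)⁻¹ (fun i => (basisKF R K n c hne hdeg).repr ρ i)) i
  rw [Matrix.mulVec_mulVec, Matrix.mul_nonsing_inv _ hdet, Matrix.one_mulVec]

lemma coordStd_add (x y : KF R K n c) :
    coordStd R K n c hne hdeg (x + y) =
      coordStd R K n c hne hdeg x + coordStd R K n c hne hdeg y := by
  rw [coordStd, coordStd, coordStd]
  have : (fun i => (basisKF R K n c hne hdeg).repr (x + y) i) =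
      (fun i => (basisKF R K n c hne hdeg).repr x i) +
      (fun i => (basisKF R K n c hne hdeg).repr y i) := by
    funext i; rw [map_add]; rfl
  rw [this, Matrix.mulVec_add]

lemma coordStd_smul (a : K) (x : KF R K n c) :
    coordStd R K n c hne hdeg (a • x) = a • coordStd R K n c hne hdeg x := by
  rw [coordStd, coordStd]
  have : (fun i => (basisKF R K n c hne hdeg).repr (a • x) i) =
      a • (fun i => (basisKF R K n c hne hdeg).repr x i) := by
    funext i; rw [_root_.map_smul, Finsupp.smul_apply]; rfl
  rw [this, Matrix.mulVec_smul]

/-- coordinate functionals as linear maps -/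
def coordL (R K : Type) [CommRing R] [Field K] [Algebra R K] (n : ℕ) (c : ℕ → R)
    (hne : binPoly R K n c ≠ 0) (hdeg : (binPoly R K n c).natDegree = n) (i : Fin n) :
    KF R K n c →ₗ[K] K where
  toFun ρ := coordStd R K n c hne hdeg ρ i
  map_add' x y := by
    show coordStd R K n c hne hdeg (x + y) i = _
    rw [coordStd_add hne hdeg]; rfl
  map_smul' a x := by
    show coordStd R K n c hne hdeg (a • x) i = _
    rw [coordStd_smul hne hdeg]; rfl

end Aux3
section Aux4
variable {R K : Type} [CommRing R] [Field K] [Algebra R K]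
variable {n : ℕ} {c : ℕ → R}
variable (hne : binPoly R K n c ≠ 0) (hdeg : (binPoly R K n c).natDegree = n)

lemma sum_single_smul {V : Type} [AddCommMonoid V] [Module K V]
    (a : K) (j : Fin n) (v : Fin n → V) :
    ∑ i, (Pi.single j a : Fin n → K) i • v i = a • v j := by
  have h := Finset.sum_eq_single (s := Finset.univ)
    (f := fun i => (Pi.single j a : Fin n → K) i • v i) j
    (fun i _ hi => by beta_reduce; rw [Pi.single_eq_of_ne hi, zero_smul])
    (fun h => absurd (Finset.mem_univ j) h)
  rw [h]
  beta_reduce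
  rw [Pi.single_eq_same]

lemma coord_stdVec (hn : 3 ≤ n) (hc0 : algebraMap R K (c 0) ≠ 0) (j : Fin n) :
    coordStd R K n c hne hdeg (stdVec R K n c (n-2) j) = Pi.single j 1 := by
  have h : stdVec R K n c (n-2) j =
      ∑ i, (Pi.single j 1 : Fin n → K) i • stdVec R K n c (n-2) i := by
    rw [sum_single_smul, one_smul]
  rw [h, coordStd_sum hne hdeg hn hc0]

lemma theta_stdVec_low {j : Fin n} (hn : 3 ≤ n) (hj : (j : ℕ) ≤ n - 3) :
    θF R K n c * stdVec R K n c (n-2) j =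
      stdVec R K n c (n-2) ⟨(j : ℕ) + 1, by omega⟩ := by
  rw [stdVec_low (by omega : ((j:ℕ) : ℕ) ≤ n - 2),
    stdVec_low (by show (j:ℕ)+1 ≤ n-2; omega), ← pow_succ']

lemma theta_stdVec_mid {j : Fin n} (hn : 3 ≤ n) (hc0 : algebraMap R K (c 0) ≠ 0)
    (hj : (j : ℕ) = n - 2) :
    θF R K n c * stdVec R K n c (n-2) j =
      ∑ i, (fun i : Fin n => if (i : ℕ) = 0 then 0 else if (i : ℕ) ≤ n - 2 then
        -(algebraMap R K (c (n - 1 - (i:ℕ))) * (algebraMap R K (c 0))⁻¹)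
        else (algebraMap R K (c 0))⁻¹) i • stdVec R K n c (n-2) i := by
  rw [stdVec_low (by omega : (j:ℕ) ≤ n - 2), hj]
  have hpow : θF R K n c * θF R K n c ^ (n - 2) = θF R K n c ^ (n - 1) := by
    rw [← pow_succ']; congr 1; omega
  rw [hpow]
  apply smul_right_injective (KF R K n c) hc0
  beta_reduce
  rw [Finset.smul_sum]
  set c0 := algebraMap R K (c 0) with hc0def
  have htop : ∀ i : Fin n, ¬((i:ℕ) ≤ n - 2) → (i : ℕ) = n - 1 := by
    intro i hi; have := i.2; omega
  have hsummand : ∀ i : Fin n,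
      c0 • ((fun i : Fin n => if (i : ℕ) = 0 then 0 else if (i : ℕ) ≤ n - 2 then
        -(algebraMap R K (c (n - 1 - (i:ℕ))) * c0⁻¹) else c0⁻¹) i
        • stdVec R K n c (n-2) i) =
      (if (i:ℕ) ≤ n - 2 then -(zvec R K n c i) • stdVec R K n c (n-2) i
        else (1:K) • stdVec R K n c (n-2) i) := by
    intro i
    beta_reduce
    by_cases h0 : (i:ℕ) = 0
    · simp only [zvec, if_pos h0, if_pos (show (i:ℕ) ≤ n - 2 by omega)]
      simp
    · by_cases hle : (i:ℕ) ≤ n - 2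
      · simp only [zvec, if_neg h0, if_pos hle]
        rw [smul_smul]
        congr 1
        field_simp
      · simp only [zvec, if_neg h0, if_neg hle]
        rw [smul_smul]
        congr 1
        field_simp
  rw [Finset.sum_congr rfl fun i _ => hsummand i]
  -- split the sum at the top index
  have htopidx : (⟨n-1, by omega⟩ : Fin n) ∈ Finset.univ := Finset.mem_univ _
  rw [← Finset.sum_erase_add _ _ htopidx]
  have herase : ∀ i ∈ Finset.univ.erase (⟨n-1, by omega⟩ : Fin n),
      (if (i:ℕ) ≤ n - 2 then -(zvec R K n c i) • stdVec R K n c (n-2) i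
        else (1:K) • stdVec R K n c (n-2) i) =
      -(zvec R K n c i • (θF R K n c ^ (i:ℕ))) := by
    intro i hi
    have hine : i ≠ (⟨n-1, by omega⟩ : Fin n) := (Finset.mem_erase.mp hi).1
    have hle : (i:ℕ) ≤ n - 2 := by
      rcases Nat.lt_or_ge (i:ℕ) (n-1) with h | h
      · omega
      · exact absurd (Fin.ext (by have := i.2; omega : (i:ℕ) = n-1)) hine
    rw [if_pos hle, stdVec_low hle, neg_smul]
  rw [Finset.sum_congr rfl herase]
  have hnotle : ¬((n-1 : ℕ) ≤ n - 2) := by omega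
  have hstdtop : stdVec R K n c (n-2) ⟨n-1, by omega⟩ = ζF R K n c (n-1) := by
    rw [stdVec, if_neg hnotle]
  have hiftop : (if ((⟨n-1, by omega⟩ : Fin n) : ℕ) ≤ n - 2 then
      -(zvec R K n c ⟨n-1, by omega⟩) • stdVec R K n c (n-2) ⟨n-1, by omega⟩
      else (1:K) • stdVec R K n c (n-2) ⟨n-1, by omega⟩) = ζF R K n c (n-1) := by
    rw [if_neg (by show ¬((n-1:ℕ) ≤ n - 2); omega), hstdtop, one_smul]
  rw [hiftop, Finset.sum_neg_distrib]
  -- now use zeta_expand : ζ = ∑ zvec i • θ^i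
  have hz := zeta_expand (R := R) (K := K) (c := c) hn
  have hzsplit : ζF R K n c (n-1) =
      (∑ i ∈ Finset.univ.erase (⟨n-1, by omega⟩ : Fin n),
        zvec R K n c i • θF R K n c ^ (i:ℕ)) + c0 • θF R K n c ^ (n-1) := by
    rw [hz, ← Finset.sum_erase_add _ _ htopidx]
    congr 1
    show zvec R K n c ⟨n-1, by omega⟩ • _ = _
    have : zvec R K n c ⟨n-1, by omega⟩ = c0 := by
      show (if (n-1 : ℕ) = 0 then (0:K) else algebraMap R K (c (n - 1 - (n-1)))) = c0
      rw [if_neg (by omega : ¬(n-1 = 0)), Nat.sub_self]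
    rw [this]
  rw [hzsplit]
  abel

lemma theta_stdVec_top {j : Fin n} (hn : 3 ≤ n) (hj : ¬((j : ℕ) ≤ n - 2)) :
    θF R K n c * stdVec R K n c (n-2) j =
      ∑ i, ((Pi.single (⟨0, by omega⟩ : Fin n) (-(algebraMap R K (c n))) : Fin n → K) i +
        (Pi.single (⟨1, by omega⟩ : Fin n) (-(algebraMap R K (c (n-1)))) : Fin n → K) i) •
        stdVec R K n c (n-2) i := by
  have hj' : (j : ℕ) = n - 1 := by have := j.2; omega
  have hstd : stdVec R K n c (n-2) j = ζF R K n c (n-1) := by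
    rw [stdVec, if_neg hj, hj']
  rw [hstd]
  have hsum : ∑ i, ((Pi.single (⟨0, by omega⟩ : Fin n) (-(algebraMap R K (c n))) : Fin n → K) i +
      (Pi.single (⟨1, by omega⟩ : Fin n) (-(algebraMap R K (c (n-1)))) : Fin n → K) i) •
      stdVec R K n c (n-2) i =
      (-(algebraMap R K (c n))) • stdVec R K n c (n-2) ⟨0, by omega⟩ +
      (-(algebraMap R K (c (n-1)))) • stdVec R K n c (n-2) ⟨1, by omega⟩ := by
    rw [Finset.sum_congr rfl (fun i _ => add_smul _ _ _), Finset.sum_add_distrib,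
      sum_single_smul, sum_single_smul]
  rw [hsum, stdVec_low (by show (0:ℕ) ≤ n-2; omega), stdVec_low (by show (1:ℕ) ≤ n-2; omega)]
  -- θ * ζ_{n-1} = -c_n - c_{n-1} θ
  have hroot := root_identity (R := R) (K := K) n c
  rw [Finset.sum_range_succ] at hroot
  rw [show Finset.range n = Finset.range ((n-1)+1) from by congr 1; omega,
    Finset.sum_range_succ] at hroot
  have he1 : n - (n - 1) = 1 := by omega
  have he0 : n - n = 0 := by omega
  rw [he1, he0] at hroot
  have hmul : θF R K n c * ζF R K n c (n-1) =
      ∑ j ∈ Finset.range (n-1), algebraMap R K (c j) • θF R K n c ^ (n - j) := by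
    rw [ζF, Finset.mul_sum]
    refine Finset.sum_congr rfl fun j hj => ?_
    simp only [Finset.mem_range] at hj
    rw [IsScalarTower.algebraMap_apply R K (KF R K n c), Algebra.smul_def]
    rw [mul_left_comm, ← pow_succ']
    congr 2
    omega
  rw [hmul, show ((⟨0, by omega⟩ : Fin n) : ℕ) = 0 from rfl,
    show ((⟨1, by omega⟩ : Fin n) : ℕ) = 1 from rfl]
  linear_combination (norm := module) hroot

end Aux4
section Aux5
variable {R K : Type} [CommRing R] [Field K] [Algebra R K]
variable {n : ℕ} {c : ℕ → R}
variable (hne : binPoly R K n c ≠ 0) (hdeg : (binPoly R K n c).natDegree = n)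

lemma coordStd_sum_smul (w : Fin n → K) (v : Fin n → KF R K n c) (i : Fin n) :
    coordStd R K n c hne hdeg (∑ j, w j • v j) i =
      ∑ j, w j * coordStd R K n c hne hdeg (v j) i := by
  have h := map_sum (coordL R K n c hne hdeg i) (fun j => w j • v j) Finset.univ
  have h2 : coordL R K n c hne hdeg i (∑ j, w j • v j) =
      coordStd R K n c hne hdeg (∑ j, w j • v j) i := rfl
  rw [← h2, h]
  refine Finset.sum_congr rfl fun j _ => ?_
  rw [_root_.map_smul (coordL R K n c hne hdeg i) (w j) (v j), smul_eq_mul]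
  rfl

lemma coord_theta_top (hn : 3 ≤ n) (hc0 : algebraMap R K (c 0) ≠ 0) (j i : Fin n)
    (hi : (i : ℕ) = n - 1) :
    coordStd R K n c hne hdeg (θF R K n c * stdVec R K n c (n-2) j) i =
      if (j : ℕ) = n - 2 then (algebraMap R K (c 0))⁻¹ else 0 := by
  by_cases hj2 : (j:ℕ) = n - 2
  · rw [if_pos hj2, theta_stdVec_mid hn hc0 hj2, coordStd_sum hne hdeg hn hc0]
    beta_reduce
    rw [if_neg (by omega : ¬((i:ℕ) = 0)), if_neg (by omega : ¬((i:ℕ) ≤ n - 2))]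
  · rw [if_neg hj2]
    by_cases hj3 : (j:ℕ) ≤ n - 3
    · rw [theta_stdVec_low hn hj3, coord_stdVec hne hdeg hn hc0]
      refine Pi.single_eq_of_ne ?_ _
      refine Fin.ne_of_val_ne ?_
      show (i:ℕ) ≠ (j:ℕ) + 1
      omega
    · have hjtop : ¬((j:ℕ) ≤ n - 2) := by omega
      rw [theta_stdVec_top hn hjtop, coordStd_sum hne hdeg hn hc0]
      beta_reduce
      rw [Pi.single_eq_of_ne (by refine Fin.ne_of_val_ne ?_; show (i:ℕ) ≠ 0; omega) _,
        Pi.single_eq_of_ne (by refine Fin.ne_of_val_ne ?_; show (i:ℕ) ≠ 1; omega) _,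
        add_zero]

lemma key_relation (hn : 3 ≤ n) (hc0 : algebraMap R K (c 0) ≠ 0) (hp : 0 < n)
    (ρ : KF R K n c) :
    piN2 R K n c hp hne hdeg ρ =
      -(algebraMap R K (c 0)) * piN1 R K n c hp hne hdeg (θF R K n c * ρ) := by
  have hρ := coordStd_spanning hne hdeg hn hc0 ρ
  set w := coordStd R K n c hne hdeg ρ with hw
  have hθρ : θF R K n c * ρ = ∑ i, w i • (θF R K n c * stdVec R K n c (n-2) i) := by
    conv_lhs => rw [hρ]
    rw [Finset.mul_sum]
    exact Finset.sum_congr rfl fun i _ => (mul_smul_comm _ _ _)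
  have main : w ⟨n-2, by omega⟩ = -(algebraMap R K (c 0)) *
      -(coordStd R K n c hne hdeg (θF R K n c * ρ) ⟨n-1, by omega⟩) := by
    rw [hθρ, coordStd_sum_smul hne hdeg]
    have hterm : ∀ i : Fin n,
        w i * coordStd R K n c hne hdeg (θF R K n c * stdVec R K n c (n-2) i)
          ⟨n-1, by omega⟩ =
        w i * (if (i : ℕ) = n - 2 then (algebraMap R K (c 0))⁻¹ else 0) := fun i => by
      rw [coord_theta_top hne hdeg hn hc0 i ⟨n-1, by omega⟩ rfl]
    rw [Finset.sum_congr rfl fun i _ => hterm i]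
    rw [Finset.sum_eq_single (⟨n-2, by omega⟩ : Fin n)
      (fun i _ hi => by
        rw [if_neg (fun hc => hi (Fin.ext (by rw [hc] : (i:ℕ) = _))), mul_zero])
      (fun h => absurd (Finset.mem_univ _) h)]
    rw [if_pos (rfl : ((⟨n-2, by omega⟩ : Fin n) : ℕ) = n - 2)]
    field_simp
  exact main

end Aux5
section Aux6
variable {R K : Type} [CommRing R] [Field K] [Algebra R K]
variable {n : ℕ} {c : ℕ → R}
variable (hne : binPoly R K n c ≠ 0) (hdeg : (binPoly R K n c).natDegree = n)

lemma shift_sum (hn : 3 ≤ n) (m t : ℕ) (hmt : m + t ≤ n - 2) (w : ℕ → K) :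
    θF R K n c ^ t * (∑ j ∈ Finset.range (m+1), w j • θF R K n c ^ j) =
      ∑ i : Fin n, (if t ≤ (i:ℕ) ∧ (i:ℕ) ≤ m + t then w ((i:ℕ) - t) else 0) •
        stdVec R K n c (n-2) i := by
  have hstd : ∀ i : Fin n,
      (if t ≤ (i:ℕ) ∧ (i:ℕ) ≤ m + t then w ((i:ℕ) - t) else 0) • stdVec R K n c (n-2) i =
      (fun k : ℕ => (if t ≤ k ∧ k ≤ m + t then w (k - t) else 0) •
        (if k ≤ n - 2 then θF R K n c ^ k else ζF R K n c k)) (i : ℕ) := fun i => rfl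
  rw [Finset.sum_congr rfl fun i _ => hstd i,
    Fin.sum_univ_eq_sum_range (fun k : ℕ => (if t ≤ k ∧ k ≤ m + t then w (k - t) else 0) •
      (if k ≤ n - 2 then θF R K n c ^ k else ζF R K n c k)) n]
  have hsub : Finset.Ico t (m+t+1) ⊆ Finset.range n := by
    intro k hk
    simp only [Finset.mem_Ico] at hk
    simp only [Finset.mem_range]
    omega
  have heq := Finset.sum_subset (f := fun k : ℕ =>
      (if t ≤ k ∧ k ≤ m + t then w (k - t) else 0) •
        (if k ≤ n - 2 then θF R K n c ^ k else ζF R K n c k)) hsub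
    (fun k _ hk2 => by
      beta_reduce
      simp only [Finset.mem_Ico, not_and, not_lt] at hk2
      rw [if_neg (fun hcon => by have := hk2 hcon.1; omega), zero_smul])
  rw [← heq]
  rw [Finset.sum_Ico_eq_sum_range]
  rw [show m + t + 1 - t = m + 1 from by omega]
  rw [Finset.mul_sum]
  refine Finset.sum_congr rfl fun j hj => ?_
  simp only [Finset.mem_range] at hj
  rw [if_pos (by omega : t ≤ t + j ∧ t + j ≤ m + t), if_pos (by omega : t + j ≤ n - 2),
    show t + j - t = j from by omega, mul_smul_comm, ← pow_add]

lemma nondeg (hn : 3 ≤ n) (hc0 : algebraMap R K (c 0) ≠ 0) (hp : 0 < n)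
    (u : KF R K n c) (h : ∀ v, piN1 R K n c hp hne hdeg (u * v) = 0) : u = 0 := by
  by_contra hu
  have hsp := coordStd_spanning hne hdeg hn hc0 u
  set w := coordStd R K n c hne hdeg u with hw
  have hw1 : w ⟨n-1, by omega⟩ = 0 := by
    have h1 := h 1
    rw [mul_one] at h1
    have h2 : -(coordStd R K n c hne hdeg u ⟨n-1, by omega⟩) = 0 := h1
    rw [neg_eq_zero] at h2
    exact h2
  set w' : ℕ → K := fun j => if hj : j < n then w ⟨j, hj⟩ else 0 with hw'
  have hu' : u = ∑ j ∈ Finset.range (n-1), w' j • θF R K n c ^ j := by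
    have hcong : ∀ i : Fin n, w i • stdVec R K n c (n-2) i =
        (fun k : ℕ => w' k • (if k ≤ n - 2 then θF R K n c ^ k else ζF R K n c k))
          (i : ℕ) := by
      intro i
      beta_reduce
      congr 1
      rw [hw']
      beta_reduce
      rw [dif_pos i.2]
    rw [hsp, Finset.sum_congr rfl fun i _ => hcong i,
      Fin.sum_univ_eq_sum_range (fun k : ℕ => w' k •
        (if k ≤ n - 2 then θF R K n c ^ k else ζF R K n c k)) n]
    rw [show Finset.range n = Finset.range ((n-1)+1) from by
      rw [Nat.sub_add_cancel (by omega)], Finset.sum_range_succ]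
    have hlast : w' (n - 1) = 0 := by
      rw [hw']
      beta_reduce
      rw [dif_pos (by omega : n - 1 < n)]
      exact hw1
    rw [hlast, zero_smul, add_zero]
    refine Finset.sum_congr rfl fun j hj => ?_
    simp only [Finset.mem_range] at hj
    rw [if_pos (by omega : j ≤ n - 2)]
  set s := (Finset.range (n-1)).filter (fun j => w' j ≠ 0) with hs
  have hsne : s.Nonempty := by
    rw [Finset.nonempty_iff_ne_empty]
    intro hemp
    apply hu
    rw [hu']
    refine Finset.sum_eq_zero fun j hj => ?_
    have : w' j = 0 := by
      by_contra hne0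
      have : j ∈ s := by rw [hs]; exact Finset.mem_filter.mpr ⟨hj, hne0⟩
      rw [hemp] at this
      exact absurd this (Finset.notMem_empty j)
    rw [this, zero_smul]
  set m := s.max' hsne with hm
  obtain ⟨hmrange, hwm⟩ := Finset.mem_filter.mp (s.max'_mem hsne)
  have hmlt : m < n - 1 := Finset.mem_range.mp hmrange
  have humsum : u = ∑ j ∈ Finset.range (m+1), w' j • θF R K n c ^ j := by
    rw [hu']
    symm
    refine Finset.sum_subset (fun j hj => by
      simp only [Finset.mem_range] at hj ⊢; omega) (fun j hj hj2 => ?_)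
    simp only [Finset.mem_range] at hj hj2
    have : w' j = 0 := by
      by_contra hne0
      have hjs : j ∈ s := Finset.mem_filter.mpr ⟨Finset.mem_range.mpr hj, hne0⟩
      have := Finset.le_max' s j hjs
      omega
    rw [this, zero_smul]
  set t := n - 2 - m with ht
  have hshift := shift_sum (R := R) (K := K) (c := c) hn m t (by omega) w'
  have hcoord : coordStd R K n c hne hdeg (θF R K n c ^ t * u) =
      fun i : Fin n => (if t ≤ (i:ℕ) ∧ (i:ℕ) ≤ m + t then w' ((i:ℕ) - t) else 0) := by
    rw [humsum, hshift, coordStd_sum hne hdeg hn hc0]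
  have hp2 : piN2 R K n c hp hne hdeg (θF R K n c ^ t * u) = w' m := by
    have h2 : coordStd R K n c hne hdeg (θF R K n c ^ t * u) ⟨n-2, by omega⟩ = w' m := by
      rw [hcoord]
      beta_reduce
      rw [if_pos (by show t ≤ n - 2 ∧ n - 2 ≤ m + t; omega)]
      congr 1
      show n - 2 - t = m
      omega
    exact h2
  have hkey := key_relation hne hdeg hn hc0 hp (θF R K n c ^ t * u)
  have hv := h (θF R K n c ^ (t+1))
  have hmul : u * θF R K n c ^ (t+1) = θF R K n c * (θF R K n c ^ t * u) := by ring
  rw [hmul] at hv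
  rw [hv, mul_zero] at hkey
  rw [hkey] at hp2
  exact hwm hp2.symm

end Aux6
section Aux7
variable {R K : Type} [CommRing R] [Field K] [Algebra R K]
variable {n : ℕ} {c : ℕ → R}
variable (hne : binPoly R K n c ≠ 0) (hdeg : (binPoly R K n c).natDegree = n)

lemma finrank_KF (hne : binPoly R K n c ≠ 0) (hdeg : (binPoly R K n c).natDegree = n) : Module.finrank K (KF R K n c) = n := by
  rw [PowerBasis.finrank (AdjoinRoot.powerBasis hne)]
  show (binPoly R K n c).natDegree = n
  exact hdeg

lemma sum_repr_theta (x : KF R K n c) :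
    ∑ i : Fin n, (basisKF R K n c hne hdeg).repr x i • θF R K n c ^ (i : ℕ) = x := by
  have h := (basisKF R K n c hne hdeg).sum_repr x
  conv_rhs => rw [← h]
  exact Finset.sum_congr rfl fun i _ => by rw [basisKF_apply hne hdeg]

lemma mult_comm_of_theta_comm (hne : binPoly R K n c ≠ 0) (hdeg : (binPoly R K n c).natDegree = n) (φ : KF R K n c →ₗ[K] KF R K n c)
    (hφ : ∀ x, φ (θF R K n c * x) = θF R K n c * φ x) :
    ∀ x y, φ (x * y) = x * φ y := by
  have hpow : ∀ (k : ℕ) (x : KF R K n c), φ (θF R K n c ^ k * x) = θF R K n c ^ k * φ x := by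
    intro k
    induction k with
    | zero => intro x; rw [pow_zero, one_mul, one_mul]
    | succ k ih =>
      intro x
      rw [pow_succ, mul_comm (θF R K n c ^ k) (θF R K n c), mul_assoc, hφ, ih, ← mul_assoc,
        mul_comm (θF R K n c) (θF R K n c ^ k)]
  intro x y
  conv_lhs => rw [← sum_repr_theta hne hdeg x]
  conv_rhs => rw [← sum_repr_theta hne hdeg x]
  rw [Finset.sum_mul, Finset.sum_mul]
  rw [map_sum]
  refine Finset.sum_congr rfl fun i _ => ?_
  rw [smul_mul_assoc, _root_.map_smul, hpow, smul_mul_assoc]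

/-- bilinear form (x,y) ↦ L(a·ψx·ψy) -/
def Bform {R K : Type} [CommRing R] [Field K] [Algebra R K] {n : ℕ} {c : ℕ → R}
    (L : KF R K n c →ₗ[K] K) (a : KF R K n c) (ψ : KF R K n c →ₗ[K] KF R K n c) :
    KF R K n c →ₗ[K] KF R K n c →ₗ[K] K :=
  LinearMap.mk₂ K (fun x y => L (a * (ψ x * ψ y)))
    (fun m₁ m₂ y => by beta_reduce; rw [map_add, add_mul, mul_add, map_add])
    (fun s m y => by
      beta_reduce; rw [_root_.map_smul, smul_mul_assoc, mul_smul_comm, _root_.map_smul])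
    (fun x n₁ n₂ => by beta_reduce; rw [map_add, mul_add, mul_add, map_add])
    (fun s x y => by
      beta_reduce; rw [_root_.map_smul, mul_smul_comm, mul_smul_comm, _root_.map_smul])

lemma Bform_apply {L : KF R K n c →ₗ[K] K} {a : KF R K n c}
    {ψ : KF R K n c →ₗ[K] KF R K n c} (x y : KF R K n c) :
    Bform L a ψ x y = L (a * (ψ x * ψ y)) := rfl

lemma orbit_transfer (L : KF R K n c →ₗ[K] K) (aP aQ : KF R K n c)
    (Pb Qb : Fin n → KF R K n c) (A A' : Matrix (Fin n) (Fin n) R)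
    (g : Matrix (Fin n) (Fin n) R)
    (hPA : ∀ k l, algebraMap R K (A k l) = L (aP * (Pb k * Pb l)))
    (hQA : ∀ i j, algebraMap R K (A' i j) = L (aQ * (Qb i * Qb j)))
    (hA' : A' = g * A * gᵀ) (i j : Fin n) :
    L (aP * ((∑ k, algebraMap R K (g i k) • Pb k) * (∑ l, algebraMap R K (g j l) • Pb l)))
      = L (aQ * (Qb i * Qb j)) := by
  have hexp : aP * ((∑ k, algebraMap R K (g i k) • Pb k) *
      (∑ l, algebraMap R K (g j l) • Pb l)) =
      ∑ k, ∑ l, (algebraMap R K (g i k) * algebraMap R K (g j l)) • (aP * (Pb k * Pb l)) := by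
    rw [Finset.sum_mul_sum, Finset.mul_sum]
    refine Finset.sum_congr rfl fun k _ => ?_
    rw [Finset.mul_sum]
    refine Finset.sum_congr rfl fun l _ => ?_
    rw [smul_mul_smul_comm, mul_smul_comm]
  rw [hexp, map_sum, ← hQA, hA']
  have hmat : algebraMap R K ((g * A * gᵀ) i j) =
      ∑ l, (∑ k, algebraMap R K (g i k) * algebraMap R K (A k l)) * algebraMap R K (g j l) := by
    rw [Matrix.mul_apply, map_sum]
    refine Finset.sum_congr rfl fun l _ => ?_
    rw [_root_.map_mul, Matrix.mul_apply, map_sum, Matrix.transpose_apply]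
    congr 1
    exact Finset.sum_congr rfl fun k _ => by rw [_root_.map_mul]
  rw [hmat]
  rw [Finset.sum_congr rfl (fun k (_ : k ∈ Finset.univ) =>
    map_sum L (fun l => (algebraMap R K (g i k) * algebraMap R K (g j l)) •
      (aP * (Pb k * Pb l))) Finset.univ)]
  rw [Finset.sum_comm]
  refine Finset.sum_congr rfl fun l _ => ?_
  rw [Finset.sum_mul]
  refine Finset.sum_congr rfl fun k _ => ?_
  rw [_root_.map_smul, ← hPA k l, smul_eq_mul]
  ring

end Aux7
section Aux8
variable {R K : Type} [CommRing R] [Field K] [Algebra R K]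
variable {n : ℕ} {c : ℕ → R}

lemma ginv_collapse (g : Matrix (Fin n) (Fin n) R) (hgdet : IsUnit g.det)
    (v : Fin n → KF R K n c) (k : Fin n) :
    ∑ l, algebraMap R K (g⁻¹ k l) • (∑ m, algebraMap R K (g l m) • v m) = v k := by
  rw [Finset.sum_congr rfl fun l (_ : l ∈ Finset.univ) => Finset.smul_sum]
  rw [Finset.sum_comm]
  have hterm : ∀ m, (∑ l, algebraMap R K (g⁻¹ k l) • algebraMap R K (g l m) • v m) =
      algebraMap R K ((1 : Matrix (Fin n) (Fin n) R) k m) • v m := by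
    intro m
    rw [← Matrix.nonsing_inv_mul g hgdet, Matrix.mul_apply, map_sum, Finset.sum_smul]
    refine Finset.sum_congr rfl fun l _ => ?_
    rw [smul_smul, _root_.map_mul]
  rw [Finset.sum_congr rfl fun m _ => hterm m]
  rw [Finset.sum_eq_single k (fun m _ hm => by
      rw [Matrix.one_apply_ne' hm, map_zero, zero_smul])
    (fun h => absurd (Finset.mem_univ k) h)]
  rw [Matrix.one_apply_eq, _root_.map_one, one_smul]

end Aux8
set_option maxHeartbeats 2000000 in
/-- Proposition 2.4: the map `orb_{F,r}` is one-to-one: if two pairs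
`(I₁, α₁)` and `(I₂, α₂)` give rise to the same `G_n(R)`-orbit, they are equivalent. -/
theorem orb_map_injective
    (R K : Type) [CommRing R] [IsDomain R] [IsPrincipalIdealRing R] [Field K]
    [Algebra R K] [IsFractionRing R K]
    (n : ℕ) (hn : 3 ≤ n) (c : ℕ → R) (hf0 : c 0 ≠ 0)
    (hne : binPoly R K n c ≠ 0) (hdeg : (binPoly R K n c).natDegree = n)
    (hsep : (binPoly R K n c).Separable) (r : Rˣ)
    (P Q : BasedPair R K n c (r : R) hne hdeg)
    (A B A' B' : Matrix (Fin n) (Fin n) R)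
    (hP : Represents R K n c (r : R) (by omega) hne hdeg P A B)
    (hQ : Represents R K n c (r : R) (by omega) hne hdeg Q A' B')
    (horb : SameOrbit R n A B A' B') :
    PairEquiv R K n c (r : R) hne hdeg P Q := by
  have hn0 : 0 < n := by omega
  have hc0 : algebraMap R K (c 0) ≠ 0 := by
    intro h
    exact hf0 (IsFractionRing.injective R K (by rw [h, map_zero]))
  obtain ⟨g, hg, hA', hB'⟩ := horb
  have hgdet : IsUnit g.det := by
    rw [GnSet, Set.mem_setOf_eq] at hg
    by_cases hodd : Odd n
    · rw [if_pos hodd] at hg; rw [hg]; exact isUnit_one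
    · rw [if_neg hodd] at hg
      rcases hg with h1 | h1 <;> rw [h1]
      · exact isUnit_one
      · exact isUnit_one.neg
  -- K-bases from the R-bases
  have liP : LinearIndependent K P.b :=
    LinearIndependent.localization K (nonZeroDivisors R) P.indep
  have liQ : LinearIndependent K Q.b :=
    LinearIndependent.localization K (nonZeroDivisors R) Q.indep
  have hcard : Fintype.card (Fin n) = Module.finrank K (KF R K n c) := by
    rw [Fintype.card_fin, finrank_KF hne hdeg]
  have hnonempty : Nonempty (Fin n) := ⟨⟨0, by omega⟩⟩
  set bP := basisOfLinearIndependentOfCardEqFinrank liP hcard with hbPdef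
  have hbP : ⇑bP = P.b := coe_basisOfLinearIndependentOfCardEqFinrank liP hcard
  set bQ := basisOfLinearIndependentOfCardEqFinrank liQ hcard with hbQdef
  have hbQ : ⇑bQ = Q.b := coe_basisOfLinearIndependentOfCardEqFinrank liQ hcard
  -- transformed basis and the map φ
  set b2 : Fin n → KF R K n c := fun i => ∑ j, algebraMap R K (g i j) • P.b j with hb2
  have hb2i : ∀ i, b2 i = ∑ j, algebraMap R K (g i j) • P.b j := fun i => rfl
  set φ := (bQ.constr K) b2 with hφdef
  have hφb : ∀ i, φ (Q.b i) = b2 i := by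
    intro i
    have h := Module.Basis.constr_basis bQ K b2 i
    rw [hbQ] at h
    exact h
  set idx1 : Fin n := ⟨n-1, by omega⟩ with hidx1
  set idx2 : Fin n := ⟨n-2, by omega⟩ with hidx2
  set L1 : KF R K n c →ₗ[K] K := -(coordL R K n c hne hdeg idx1) with hL1
  set L2 : KF R K n c →ₗ[K] K := coordL R K n c hne hdeg idx2 with hL2
  set iP := Ring.inverse P.α with hiPdef
  set iQ := Ring.inverse Q.α with hiQdef
  have hPA : ∀ k l, algebraMap R K (A k l) = L1 (iP * (P.b k * P.b l)) := fun k l => hP.1 k l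
  have hPB : ∀ k l, algebraMap R K (B k l) = L2 (iP * (P.b k * P.b l)) := fun k l => hP.2 k l
  have hQA : ∀ k l, algebraMap R K (A' k l) = L1 (iQ * (Q.b k * Q.b l)) := fun k l => hQ.1 k l
  have hQB : ∀ k l, algebraMap R K (B' k l) = L2 (iQ * (Q.b k * Q.b l)) := fun k l => hQ.2 k l
  -- the two isometry identities
  have hcore1 : ∀ i j, L1 (iP * (φ (Q.b i) * φ (Q.b j))) = L1 (iQ * (Q.b i * Q.b j)) := by
    intro i j
    rw [hφb i, hφb j, hb2i i, hb2i j]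
    exact orbit_transfer L1 iP iQ P.b Q.b A A' g hPA hQA hA' i j
  have hcore2 : ∀ i j, L2 (iP * (φ (Q.b i) * φ (Q.b j))) = L2 (iQ * (Q.b i * Q.b j)) := by
    intro i j
    rw [hφb i, hφb j, hb2i i, hb2i j]
    exact orbit_transfer L2 iP iQ P.b Q.b B B' g hPB hQB hB' i j
  have hBeq1 : Bform L1 iP φ = Bform L1 iQ LinearMap.id := by
    refine Module.Basis.ext bQ fun i => Module.Basis.ext bQ fun j => ?_
    show L1 (iP * (φ (bQ i) * φ (bQ j))) = L1 (iQ * (bQ i * bQ j))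
    rw [hbQ]
    exact hcore1 i j
  have hBeq2 : Bform L2 iP φ = Bform L2 iQ LinearMap.id := by
    refine Module.Basis.ext bQ fun i => Module.Basis.ext bQ fun j => ?_
    show L2 (iP * (φ (bQ i) * φ (bQ j))) = L2 (iQ * (bQ i * bQ j))
    rw [hbQ]
    exact hcore2 i j
  have hiso1 : ∀ x y, L1 (iP * (φ x * φ y)) = L1 (iQ * (x * y)) := fun x y =>
    LinearMap.congr_fun (LinearMap.congr_fun hBeq1 x) y
  have hiso2 : ∀ x y, L2 (iP * (φ x * φ y)) = L2 (iQ * (x * y)) := fun x y =>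
    LinearMap.congr_fun (LinearMap.congr_fun hBeq2 x) y
  -- surjectivity of φ
  have hPbr : ∀ k, φ (∑ l, algebraMap R K (g⁻¹ k l) • Q.b l) = P.b k := by
    intro k
    rw [map_sum]
    have hterm : ∀ l, φ (algebraMap R K (g⁻¹ k l) • Q.b l) =
        algebraMap R K (g⁻¹ k l) • (∑ m, algebraMap R K (g l m) • P.b m) := fun l => by
      rw [_root_.map_smul, hφb l, hb2i l]
    rw [Finset.sum_congr rfl fun l _ => hterm l]
    exact ginv_collapse g hgdet P.b k
  have hsurj : ∀ v : KF R K n c, ∃ u, φ u = v := by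
    intro v
    refine ⟨∑ k, bP.repr v k • (∑ l, algebraMap R K (g⁻¹ k l) • Q.b l), ?_⟩
    rw [map_sum]
    conv_rhs => rw [← bP.sum_repr v]
    refine Finset.sum_congr rfl fun k _ => ?_
    rw [_root_.map_smul, hPbr k]
    rw [hbP]
  -- key relation in L-form
  have hrel : ∀ ρ, L2 ρ = -(algebraMap R K (c 0)) * L1 (θF R K n c * ρ) := fun ρ =>
    key_relation hne hdeg hn hc0 hn0 ρ
  -- nondegeneracy in L-form
  have hnondeg : ∀ u : KF R K n c, (∀ v, L1 (u * v) = 0) → u = 0 := fun u h =>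
    nondeg hne hdeg hn hc0 hn0 u h
  -- intertwining with θ
  have hcomm : ∀ x, φ (θF R K n c * x) = θF R K n c * φ x := by
    intro x
    have hkey : ∀ y, L1 ((iP * (θF R K n c * φ x - φ (θF R K n c * x))) * φ y) = 0 := by
      intro y
      have e1 := hiso1 (θF R K n c * x) y
      have e2 := hiso2 x y
      rw [hrel (iP * (φ x * φ y)), hrel (iQ * (x * y))] at e2
      have hmc0 : -(algebraMap R K (c 0)) ≠ 0 := neg_ne_zero.mpr hc0
      have e2' := mul_left_cancel₀ hmc0 e2
      have r1 : θF R K n c * (iP * (φ x * φ y)) = iP * ((θF R K n c * φ x) * φ y) := by ring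
      have r2 : θF R K n c * (iQ * (x * y)) = iQ * ((θF R K n c * x) * y) := by ring
      rw [r1, r2] at e2'
      have e3 : L1 (iP * ((θF R K n c * φ x) * φ y)) - L1 (iP * (φ (θF R K n c * x) * φ y))
          = 0 := by
        rw [e2', e1, sub_self]
      rw [← map_sub] at e3
      have r3 : iP * ((θF R K n c * φ x) * φ y) - iP * (φ (θF R K n c * x) * φ y) =
          (iP * (θF R K n c * φ x - φ (θF R K n c * x))) * φ y := by ring
      rw [r3] at e3
      exact e3
    have hall : ∀ v, L1 ((iP * (θF R K n c * φ x - φ (θF R K n c * x))) * v) = 0 := by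
      intro v
      obtain ⟨u, hu⟩ := hsurj v
      rw [← hu]
      exact hkey u
    have hz := hnondeg _ hall
    have hα := Ring.mul_inverse_cancel P.α P.unitα
    have hfin : θF R K n c * φ x - φ (θF R K n c * x) =
        P.α * (iP * (θF R K n c * φ x - φ (θF R K n c * x))) := by
      rw [← mul_assoc, hα, one_mul]
    rw [hz, mul_zero] at hfin
    exact (sub_eq_zero.mp hfin).symm
  -- φ is multiplication by κ
  set κ := φ 1 with hκdef
  have hφmul : ∀ x, φ x = x * κ := by
    intro x
    have h := mult_comm_of_theta_comm hne hdeg φ hcomm x 1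
    rw [mul_one] at h
    exact h
  have hκunit : IsUnit κ := by
    obtain ⟨u, hu⟩ := hsurj 1
    rw [hφmul u] at hu
    exact IsUnit.of_mul_eq_one (a := κ) u (by rw [mul_comm]; exact hu)
  -- α relation
  have hαrel : P.α = κ ^ 2 * Q.α := by
    have hzero : iP * κ ^ 2 - iQ = 0 := by
      apply hnondeg
      intro v
      have e1 := hiso1 1 v
      rw [hφmul 1, hφmul v, one_mul] at e1
      have r : (iP * κ ^ 2 - iQ) * v = iP * (κ * (v * κ)) - iQ * (1 * v) := by ring
      rw [r, map_sub, e1, sub_self]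
    have h1 : iP * κ ^ 2 = iQ := sub_eq_zero.mp hzero
    have hαP := Ring.mul_inverse_cancel P.α P.unitα
    have hαQ := Ring.mul_inverse_cancel Q.α Q.unitα
    calc P.α = P.α * (Q.α * iQ) := by rw [hαQ, mul_one]
    _ = P.α * (Q.α * (iP * κ ^ 2)) := by rw [h1]
    _ = κ ^ 2 * Q.α * (P.α * iP) := by ring
    _ = κ ^ 2 * Q.α := by rw [hαP, mul_one]
  refine ⟨κ, hκunit, hαrel, g⁻¹, ?_, ?_⟩
  · -- g⁻¹ ∈ GnSet R n
    rw [GnSet, Set.mem_setOf_eq] at hg ⊢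
    have hdetinv : (g⁻¹).det = Ring.inverse g.det := Matrix.det_nonsing_inv g
    by_cases hodd : Odd n
    · rw [if_pos hodd] at hg ⊢
      rw [hdetinv, hg, Ring.inverse_one]
    · rw [if_neg hodd] at hg ⊢
      rcases hg with h1 | h1
      · left; rw [hdetinv, h1, Ring.inverse_one]
      · right
        rw [hdetinv, h1]
        have hu : IsUnit (-1 : R) := isUnit_one.neg
        have h2 := Ring.mul_inverse_cancel (-1 : R) hu
        linear_combination -h2
  · -- basis relation
    intro i
    have hφQ : ∀ j, κ * Q.b j = ∑ m, algebraMap R K (g j m) • P.b m := by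
      intro j
      rw [mul_comm, ← hφmul (Q.b j), hφb j, hb2i j]
    have halg : ∀ (s : R) (x : KF R K n c),
        algebraMap R (KF R K n c) s * x = algebraMap R K s • x := fun s x => by
      rw [IsScalarTower.algebraMap_apply R K (KF R K n c), ← Algebra.smul_def]
    have hfin : ∑ j, algebraMap R (KF R K n c) (g⁻¹ i j) * (κ * Q.b j) = P.b i := by
      rw [Finset.sum_congr rfl fun j _ => by rw [halg, hφQ j]]
      exact ginv_collapse g hgdet P.b i
    exact hfin.symm


end BHS
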